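/- arXiv:1212.4999 — 4 statements merged into one kernel-verified Lean document; each statement's English description precedes it below -/
import Mathlib

section
/- Let B be the c × r incidence matrix of a directed graph and K = diag(κ₁,…,κ_r) with all κⱼ > 0. For γ ∈ ℝ^c, γᵀ B K Bᵀ Exp(γ) = 0 if and only if Bᵀ γ = 0. -/
open Matrix in
private lemma BTmul (c r : ℕ) (S P : Fin r → Fin c) (hSP : ∀ j, S j ≠ P j)
    (B : Matrix (Fin c) (Fin r) ℝ)
    (hB : ∀ i j, B i j = if i = S j then 1 else if i = P j then -1 else 0)
    (x : Fin c → ℝ) (j : Fin r) :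
    (Bᵀ *ᵥ x) j = x (S j) - x (P j) := by
  simp only [Matrix.mulVec, dotProduct, Matrix.transpose_apply, hB]
  have : ∀ i, (if i = S j then (1:ℝ) else if i = P j then -1 else 0) * x i
      = (if i = S j then x i else 0) + (if i = P j then -x i else 0) := by
    intro i
    by_cases h1 : i = S j
    · have h2 : ¬ i = P j := fun h => hSP j (h1 ▸ h ▸ rfl)
      simp [h1, h2, hSP j]
    · by_cases h2 : i = P j <;> simp [h1, h2, Ne.symm (hSP j)]
  rw [Finset.sum_congr rfl fun i _ => this i, Finset.sum_add_distrib]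
  simp [sub_eq_add_neg]

private lemma term_eq_zero (a b : ℝ) : (a - b) * (Real.exp a - Real.exp b) = 0 ↔ a = b := by
  constructor
  · intro h
    rcases lt_trichotomy a b with hl | hl | hl
    · have := Real.exp_lt_exp.2 hl; nlinarith
    · exact hl
    · have := Real.exp_lt_exp.2 hl; nlinarith
  · intro h; simp [h]

open Matrix in
theorem laplacian_exp_dissipation_eq_zero_iff (c r : ℕ) (S P : Fin r → Fin c)
    (hSP : ∀ j, S j ≠ P j)
    (B : Matrix (Fin c) (Fin r) ℝ)
    (hB : ∀ i j, B i j = if i = S j then 1 else if i = P j then -1 else 0)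
    (κ : Fin r → ℝ) (hκ : ∀ j, 0 < κ j)
    (γ : Fin c → ℝ) :
    γ ⬝ᵥ (B * Matrix.diagonal κ * Bᵀ) *ᵥ (fun i => Real.exp (γ i)) = 0 ↔
      Bᵀ *ᵥ γ = 0 := by
  have key : γ ⬝ᵥ (B * Matrix.diagonal κ * Bᵀ) *ᵥ (fun i => Real.exp (γ i))
      = ∑ j, κ j * ((γ (S j) - γ (P j)) * (Real.exp (γ (S j)) - Real.exp (γ (P j)))) := by
    rw [← Matrix.mulVec_mulVec, ← Matrix.mulVec_mulVec, Matrix.dotProduct_mulVec,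
      ← Matrix.mulVec_transpose]
    simp only [dotProduct, Matrix.mulVec_diagonal,
      BTmul c r S P hSP B hB]
    exact Finset.sum_congr rfl fun j _ => by ring
  rw [key]
  constructor
  · intro h
    have hnn : ∀ j ∈ Finset.univ, 0 ≤ κ j * ((γ (S j) - γ (P j)) * (Real.exp (γ (S j)) - Real.exp (γ (P j)))) := by
      intro j _
      apply mul_nonneg (hκ j).le
      rcases lt_trichotomy (γ (S j)) (γ (P j)) with hl | hl | hl
      · have := Real.exp_lt_exp.2 hl; nlinarith
      · simp [hl]
      · have := Real.exp_lt_exp.2 hl; nlinarith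
    have := (Finset.sum_eq_zero_iff_of_nonneg hnn).1 h
    funext j
    have hj := this j (Finset.mem_univ j)
    have ht : (γ (S j) - γ (P j)) * (Real.exp (γ (S j)) - Real.exp (γ (P j))) = 0 := by
      rcases mul_eq_zero.1 hj with h' | h'
      · exact absurd h' (hκ j).ne'
      · exact h'
    have := (term_eq_zero _ _).1 ht
    rw [BTmul c r S P hSP B hB, this]
    simp
  · intro h
    apply Finset.sum_eq_zero
    intro j _
    have := congrFun h j
    rw [BTmul c r S P hSP B hB] at this
    have hEq : γ (S j) = γ (P j) := by simpa [sub_eq_zero] using this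
    simp [hEq]
end

section
/- Let Z ∈ ℝ^{m×c}, B a c × r graph incidence matrix, K a positive diagonal r × r matrix, and x* ∈ ℝ₊^m. Define μ(x) = Ln(x/x*) and f(x) = −ZBK Bᵀ Exp(Zᵀ μ(x)) for x ∈ ℝ₊^m. Then μ(x)ᵀ f(x) ≤ 0 for all x ∈ ℝ₊^m; i.e., the reaction vector field dissipates the Gibbs free energy. -/
open Matrix in
theorem reaction_vector_field_dissipates (m c r : ℕ) (S P : Fin r → Fin c)
    (hSP : ∀ j, S j ≠ P j)
    (B : Matrix (Fin c) (Fin r) ℝ)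
    (hB : ∀ i j, B i j = if i = S j then 1 else if i = P j then -1 else 0)
    (κ : Fin r → ℝ) (hκ : ∀ j, 0 < κ j)
    (Z : Matrix (Fin m) (Fin c) ℝ)
    (xs : Fin m → ℝ) (hxs : ∀ i, 0 < xs i)
    (x : Fin m → ℝ) (hx : ∀ i, 0 < x i)
    (μ : Fin m → ℝ) (hμ : μ = fun i => Real.log (x i / xs i))
    (f : Fin m → ℝ)
    (hf : f = -((Z * B * Matrix.diagonal κ * Bᵀ) *ᵥ
      fun ρ => Real.exp ((Zᵀ *ᵥ μ) ρ))) :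
    μ ⬝ᵥ f ≤ 0 := by
  set a : Fin c → ℝ := Zᵀ *ᵥ μ with ha
  set e : Fin c → ℝ := fun ρ => Real.exp (a ρ) with he
  -- key: action of Bᵀ
  have key : ∀ (v : Fin c → ℝ) (j : Fin r), (Bᵀ *ᵥ v) j = v (S j) - v (P j) := by
    intro v j
    have : ∀ i : Fin c, Bᵀ j i * v i =
        (if i = S j then v i else 0) + (if i = P j then -v i else 0) := by
      intro i
      by_cases h1 : i = S j
      · have h2 : i ≠ P j := by rw [h1]; exact hSP j
        simp [Matrix.transpose_apply, hB, h1, h2, hSP j]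
      · by_cases h2 : i = P j
        · simp [Matrix.transpose_apply, hB, h1, h2, Ne.symm (hSP j)]
        · simp [Matrix.transpose_apply, hB, h1, h2, hSP j]
    simp only [Matrix.mulVec, dotProduct]
    rw [Finset.sum_congr rfl (fun i _ => this i), Finset.sum_add_distrib,
      Finset.sum_ite_eq' _ (S j), Finset.sum_ite_eq' _ (P j)]
    simp [sub_eq_add_neg]
  have hdot : μ ⬝ᵥ f = -∑ j, ((Bᵀ *ᵥ a) j * κ j) * ((Bᵀ *ᵥ e) j) := by
    rw [hf, dotProduct_neg, neg_inj, Matrix.dotProduct_mulVec,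
      ← Matrix.vecMul_vecMul, ← Matrix.vecMul_vecMul, ← Matrix.vecMul_vecMul,
      Matrix.vecMul_transpose, dotProduct_comm, Matrix.dotProduct_mulVec,
      ← Matrix.mulVec_transpose]
    rw [show μ ᵥ* Z = a by rw [ha, Matrix.mulVec_transpose]]
    rw [show a ᵥ* B = Bᵀ *ᵥ a by rw [Matrix.mulVec_transpose]]
    simp only [dotProduct, Matrix.vecMul_diagonal]
    exact Finset.sum_congr rfl fun j _ => by ring
  rw [hdot, neg_nonpos]
  apply Finset.sum_nonneg
  intro j _
  rw [key a j, key e j]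
  have hmono : (a (S j) - a (P j)) * (e (S j) - e (P j)) ≥ 0 := by
    rcases le_total (a (S j)) (a (P j)) with h | h
    · have h2 : e (S j) - e (P j) ≤ 0 := by
        simp only [he, sub_nonpos]; exact Real.exp_le_exp.mpr h
      have := mul_nonneg (neg_nonneg.mpr (by linarith : a (S j) - a (P j) ≤ 0))
        (neg_nonneg.mpr h2)
      calc (0:ℝ) ≤ _ := this
        _ = (a (S j) - a (P j)) * (e (S j) - e (P j)) := by ring
    · apply mul_nonneg
      · linarith
      · simp only [he, sub_nonneg]
        exact Real.exp_le_exp.mpr h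
  calc (0:ℝ) ≤ κ j * ((a (S j) - a (P j)) * (e (S j) - e (P j))) :=
        mul_nonneg (hκ j).le hmono
    _ = (a (S j) - a (P j)) * κ j * (e (S j) - e (P j)) := by ring
end

section
/- Let Z ∈ ℝ^{m×c}, B a c × r graph incidence matrix, K positive diagonal, x* ∈ ℝ₊^m, and f(x) = −ZBK Bᵀ Exp(Zᵀ Ln(x/x*)). Then for x ∈ ℝ₊^m, Ln(x/x*)ᵀ f(x) = 0 if and only if Bᵀ Zᵀ Ln(x/x*) = 0. -/
open Matrix in
theorem reaction_dissipation_zero_iff (m c r : ℕ) (S P : Fin r → Fin c)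
    (hSP : ∀ j, S j ≠ P j)
    (B : Matrix (Fin c) (Fin r) ℝ)
    (hB : ∀ i j, B i j = if i = S j then 1 else if i = P j then -1 else 0)
    (κ : Fin r → ℝ) (hκ : ∀ j, 0 < κ j)
    (Z : Matrix (Fin m) (Fin c) ℝ)
    (xs : Fin m → ℝ) (hxs : ∀ i, 0 < xs i)
    (x : Fin m → ℝ) (hx : ∀ i, 0 < x i)
    (μ : Fin m → ℝ) (hμ : μ = fun i => Real.log (x i / xs i))
    (f : Fin m → ℝ)
    (hf : f = -((Z * B * Matrix.diagonal κ * Bᵀ) *ᵥ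
      fun ρ => Real.exp ((Zᵀ *ᵥ μ) ρ))) :
    μ ⬝ᵥ f = 0 ↔ (Bᵀ * Zᵀ) *ᵥ μ = 0 := by
  set v : Fin c → ℝ := Zᵀ *ᵥ μ with hv
  -- key: action of Bᵀ on a vector
  have hBT : ∀ (w : Fin c → ℝ) (j : Fin r), (Bᵀ *ᵥ w) j = w (S j) - w (P j) := by
    intro w j
    have h0 : (Bᵀ *ᵥ w) j = ∑ i, B i j * w i := by
      simp [mulVec, dotProduct, Matrix.transpose_apply]
    rw [h0]
    have hsplit : ∀ i : Fin c, B i j * w i =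
        (if S j = i then w i else 0) + (if P j = i then -(w i) else 0) := by
      intro i
      rw [hB]
      by_cases h1 : i = S j
      · subst h1
        simp [hSP j, Ne.symm (hSP j)]
      · by_cases h2 : i = P j
        · subst h2
          simp [h1, Ne.symm h1]
        · simp [h1, h2, Ne.symm h1, Ne.symm h2]
    rw [Finset.sum_congr rfl fun i _ => hsplit i, Finset.sum_add_distrib,
      Finset.sum_ite_eq, Finset.sum_ite_eq]
    simp
    ring
  have hterm : ∀ j, ((Bᵀ * Zᵀ) *ᵥ μ) j = v (S j) - v (P j) := by
    intro j
    rw [← Matrix.mulVec_mulVec, ← hv, hBT]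
  -- express the dot product
  have hdot : μ ⬝ᵥ f =
      -∑ j, κ j * ((v (S j) - v (P j)) *
        (Real.exp (v (S j)) - Real.exp (v (P j)))) := by
    rw [hf, dotProduct_neg]
    congr 1
    rw [show Z * B * Matrix.diagonal κ * Bᵀ = Z * (B * (Matrix.diagonal κ * Bᵀ))
      from by rw [Matrix.mul_assoc, Matrix.mul_assoc]]
    rw [← Matrix.mulVec_mulVec, Matrix.dotProduct_mulVec, ← Matrix.mulVec_transpose,
      ← hv, ← Matrix.mulVec_mulVec, Matrix.dotProduct_mulVec, ← Matrix.mulVec_transpose]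
    rw [← Matrix.mulVec_mulVec]
    simp only [dotProduct, Matrix.mulVec_diagonal, hBT]
    refine Finset.sum_congr rfl fun j _ => ?_
    ring
  -- nonnegativity of each term
  have hnn : ∀ j, 0 ≤ κ j * ((v (S j) - v (P j)) *
      (Real.exp (v (S j)) - Real.exp (v (P j)))) := by
    intro j
    refine mul_nonneg (hκ j).le ?_
    rcases le_total (v (S j)) (v (P j)) with h | h
    · have he : Real.exp (v (S j)) ≤ Real.exp (v (P j)) := Real.exp_le_exp.mpr h
      nlinarith
    · have he : Real.exp (v (P j)) ≤ Real.exp (v (S j)) := Real.exp_le_exp.mpr h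
      nlinarith
  constructor
  · intro h0
    have hsum : ∑ j, κ j * ((v (S j) - v (P j)) *
        (Real.exp (v (S j)) - Real.exp (v (P j)))) = 0 := by
      rw [hdot] at h0; linarith
    have hzero := (Finset.sum_eq_zero_iff_of_nonneg
      (fun j _ => hnn j)).mp hsum
    funext j
    have hj := hzero j (Finset.mem_univ j)
    have : (v (S j) - v (P j)) * (Real.exp (v (S j)) - Real.exp (v (P j))) = 0 := by
      have := (hκ j).ne'
      rcases mul_eq_zero.mp hj with h | h
      · exact absurd h this
      · exact h
    have heq : v (S j) = v (P j) := by
      by_contra hne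
      rcases lt_or_gt_of_ne hne with hlt | hlt
      · have h1 : Real.exp (v (S j)) < Real.exp (v (P j)) := Real.exp_lt_exp.mpr hlt
        nlinarith
      · have h1 : Real.exp (v (P j)) < Real.exp (v (S j)) := Real.exp_lt_exp.mpr hlt
        nlinarith
    rw [hterm, heq]
    simp
  · intro h0
    rw [hdot]
    have : ∀ j, v (S j) - v (P j) = 0 := by
      intro j
      rw [← hterm j, h0]
      rfl
    simp only [this, zero_mul, mul_zero, Finset.sum_const_zero, neg_zero]
end

section
/- In the compartmental balanced reaction-diffusion model Ẋ = −(W⁻¹ ⊗ I_m) Δ_d (X/X*) + F(X), with Δ_d = (d ⊗ I_m)ᵀ H R (d ⊗ I_m) (H, R diagonal positive definite, d the incidence matrix of a connected primal mesh graph), F(X) the stacked balanced mass-action vector fields f(xʲ) = −Z B K Bᵀ Exp(Zᵀ Ln(xʲ/x*)), and W = diag(wⱼ) ⊗ I_m the positive compartment-volume weights, the Lyapunov derivative satisfies Ġ_d(X) = ∇G_d(X)ᵀ Ẋ ≤ 0 for all X ∈ ℝ₊^{mN}, where G_d(X) = Σⱼ wⱼ G(xʲ). -/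
lemma aux_col_dot {n : ℕ} (s p : Fin n) (hsp : s ≠ p) (cf u : Fin n → ℝ)
    (hcf : ∀ i, cf i = if i = s then 1 else if i = p then -1 else 0) :
    ∑ i, cf i * u i = u s - u p := by
  have key : ∀ i, cf i * u i
      = (if i = s then u i else 0) + (if i = p then -u i else 0) := by
    intro i
    rw [hcf]
    by_cases h1 : i = s <;> by_cases h2 : i = p <;> simp_all
  simp [key, Finset.sum_add_distrib, sub_eq_add_neg]

lemma aux_log_mono (a b : ℝ) (ha : 0 < a) (hb : 0 < b) :
    0 ≤ (Real.log a - Real.log b) * (a - b) := by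
  rcases le_total a b with hab | hab
  · have h1 : Real.log a ≤ Real.log b := Real.log_le_log ha hab
    nlinarith
  · have h1 : Real.log b ≤ Real.log a := Real.log_le_log hb hab
    nlinarith

lemma aux_exp_mono (a b : ℝ) : 0 ≤ (a - b) * (Real.exp a - Real.exp b) := by
  rcases le_total a b with hab | hab
  · have h1 : Real.exp a ≤ Real.exp b := Real.exp_le_exp.2 hab
    nlinarith
  · have h1 : Real.exp b ≤ Real.exp a := Real.exp_le_exp.2 hab
    nlinarith

open Matrix in
theorem compartmental_lyapunov_derivative_nonpos
    (m c r N Ne : ℕ)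
    -- complex graph
    (Sc P : Fin r → Fin c) (hSP : ∀ j, Sc j ≠ P j)
    (B : Matrix (Fin c) (Fin r) ℝ)
    (hB : ∀ i j, B i j = if i = Sc j then 1 else if i = P j then -1 else 0)
    (κ : Fin r → ℝ) (hκ : ∀ j, 0 < κ j)
    (Z : Matrix (Fin m) (Fin c) ℝ)
    (xs : Fin m → ℝ) (hxs : ∀ i, 0 < xs i)
    -- mesh graph
    (head tail : Fin Ne → Fin N) (hht : ∀ e, head e ≠ tail e)
    (d : Matrix (Fin Ne) (Fin N) ℝ)
    (hd : ∀ e v, d e v = if v = head e then 1 else if v = tail e then -1 else 0)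
    -- Kronecker product d ⊗ I_m
    (dI : Matrix (Fin Ne × Fin m) (Fin N × Fin m) ℝ)
    (hdI : ∀ p q, dI p q = if p.2 = q.2 then d p.1 q.1 else 0)
    -- positive diagonal Hodge and diffusion matrices
    (h R : Fin Ne × Fin m → ℝ) (hh : ∀ e, 0 < h e) (hR : ∀ e, 0 < R e)
    (Δd : Matrix (Fin N × Fin m) (Fin N × Fin m) ℝ)
    (hΔ : Δd = dIᵀ * Matrix.diagonal h * Matrix.diagonal R * dI)
    -- compartment volumes
    (w : Fin N → ℝ) (hw : ∀ j, 0 < w j)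
    -- state
    (X : Fin N → Fin m → ℝ) (hX : ∀ j i, 0 < X j i)
    -- reaction vector field
    (f : (Fin m → ℝ) → (Fin m → ℝ))
    (hf : ∀ x, f x = -((Z * B * Matrix.diagonal κ * Bᵀ) *ᵥ
      fun ρ => Real.exp ((Zᵀ *ᵥ fun i => Real.log (x i / xs i)) ρ)))
    -- time derivative of the state
    (Xdot : Fin N × Fin m → ℝ)
    (hXdot : ∀ p, Xdot p =
      -(1 / w p.1) * ((Δd *ᵥ fun q => X q.1 q.2 / xs q.2) p) + f (X p.1) p.2)
    -- gradient of the total Gibbs free energy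
    (gradGd : Fin N × Fin m → ℝ)
    (hgrad : ∀ p, gradGd p = w p.1 * Real.log (X p.1 p.2 / xs p.2)) :
    gradGd ⬝ᵥ Xdot ≤ 0 := by
  classical
  set L : Fin N × Fin m → ℝ := fun p => Real.log (X p.1 p.2 / xs p.2) with hL
  set v : Fin N × Fin m → ℝ := fun q => X q.1 q.2 / xs q.2 with hv
  -- action of dI on any vector
  have mulVec_dI : ∀ (u : Fin N × Fin m → ℝ) (e : Fin Ne × Fin m),
      (dI *ᵥ u) e = u (head e.1, e.2) - u (tail e.1, e.2) := by
    intro u e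
    have inner : ∀ vtx : Fin N,
        ∑ i : Fin m, dI e (vtx, i) * u (vtx, i) = d e.1 vtx * u (vtx, e.2) := by
      intro vtx
      rw [Finset.sum_eq_single e.2]
      · rw [hdI]; simp
      · intro i _ hi; rw [hdI]; simp only
        rw [if_neg (fun hc => hi hc.symm)]; ring
      · simp
    calc (dI *ᵥ u) e = ∑ vtx : Fin N, ∑ i : Fin m, dI e (vtx, i) * u (vtx, i) := by
          simp [Matrix.mulVec, dotProduct, Fintype.sum_prod_type]
      _ = ∑ vtx : Fin N, d e.1 vtx * u (vtx, e.2) :=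
          Finset.sum_congr rfl (fun vtx _ => inner vtx)
      _ = u (head e.1, e.2) - u (tail e.1, e.2) :=
          aux_col_dot (head e.1) (tail e.1) (hht e.1) _ _ (hd e.1)
  -- diffusion quadratic form
  have hquad : L ⬝ᵥ (Δd *ᵥ v)
      = ∑ e : Fin Ne × Fin m, h e * R e * ((dI *ᵥ L) e * (dI *ᵥ v) e) := by
    rw [hΔ, Matrix.mul_assoc, Matrix.mul_assoc, ← Matrix.mulVec_mulVec,
      Matrix.dotProduct_mulVec, Matrix.vecMul_transpose,
      ← Matrix.mulVec_mulVec, ← Matrix.mulVec_mulVec]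
    simp only [dotProduct, Matrix.mulVec_diagonal]
    exact Finset.sum_congr rfl (fun e _ => by ring)
  -- the diffusion part is nonpositive
  have hdiffpos : 0 ≤ L ⬝ᵥ (Δd *ᵥ v) := by
    rw [hquad]
    apply Finset.sum_nonneg
    intro e _
    rw [mulVec_dI, mulVec_dI]
    apply mul_nonneg (mul_nonneg (hh e).le (hR e).le)
    have h1 : 0 < X (head e.1) e.2 / xs e.2 := div_pos (hX _ _) (hxs _)
    have h2 : 0 < X (tail e.1) e.2 / xs e.2 := div_pos (hX _ _) (hxs _)
    exact aux_log_mono _ _ h1 h2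
  -- reaction part per compartment
  have hreact : ∀ j : Fin N, 0 ≤ -∑ i : Fin m, L (j, i) * f (X j) i := by
    intro j
    set Lj : Fin m → ℝ := fun i => Real.log (X j i / xs i) with hLj
    set μ : Fin c → ℝ := Zᵀ *ᵥ Lj with hμ
    set E : Fin c → ℝ := fun γ => Real.exp (μ γ) with hE
    have hfi : ∀ i, f (X j) i = -(((Z * B * Matrix.diagonal κ * Bᵀ) *ᵥ E) i) := by
      intro i; rw [hf]; rfl
    have hBt : ∀ (u : Fin c → ℝ) (ρ : Fin r),
        (Bᵀ *ᵥ u) ρ = u (Sc ρ) - u (P ρ) := by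
      intro u ρ
      simp only [Matrix.mulVec, dotProduct, Matrix.transpose_apply]
      exact aux_col_dot (Sc ρ) (P ρ) (hSP ρ) _ _ (fun i => hB i ρ)
    have key : ∑ i : Fin m, L (j, i) * f (X j) i
        = -∑ ρ : Fin r, κ ρ * ((Bᵀ *ᵥ μ) ρ * (Bᵀ *ᵥ E) ρ) := by
      have e1 : ∑ i : Fin m, L (j, i) * f (X j) i
          = -(Lj ⬝ᵥ ((Z * B * Matrix.diagonal κ * Bᵀ) *ᵥ E)) := by
        simp only [dotProduct, hfi]
        rw [← Finset.sum_neg_distrib]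
        exact Finset.sum_congr rfl (fun i _ => by ring)
      rw [e1]
      congr 1
      rw [show Z * B * Matrix.diagonal κ * Bᵀ
            = Z * (B * (Matrix.diagonal κ * Bᵀ)) by
          rw [Matrix.mul_assoc, Matrix.mul_assoc],
        ← Matrix.mulVec_mulVec, Matrix.dotProduct_mulVec,
        ← Matrix.mulVec_transpose, ← hμ,
        ← Matrix.mulVec_mulVec, Matrix.dotProduct_mulVec,
        ← Matrix.mulVec_transpose, ← Matrix.mulVec_mulVec]
      simp only [dotProduct, Matrix.mulVec_diagonal]
      exact Finset.sum_congr rfl (fun ρ _ => by ring)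
    rw [key, neg_neg]
    apply Finset.sum_nonneg
    intro ρ _
    rw [hBt, hBt]
    apply mul_nonneg (hκ ρ).le
    exact aux_exp_mono _ _
  -- combine
  have split : gradGd ⬝ᵥ Xdot
      = -(L ⬝ᵥ (Δd *ᵥ v)) + ∑ j : Fin N, w j * ∑ i : Fin m, L (j, i) * f (X j) i := by
    simp only [dotProduct, hgrad, hXdot, mul_add]
    rw [Finset.sum_add_distrib]
    congr 1
    · simp only [dotProduct, ← Finset.sum_neg_distrib]
      apply Finset.sum_congr rfl
      intro p _
      have hwne : w p.1 ≠ 0 := (hw p.1).ne'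
      field_simp
      ring
    · rw [Fintype.sum_prod_type]
      apply Finset.sum_congr rfl
      intro j _
      rw [Finset.mul_sum]
      apply Finset.sum_congr rfl
      intro i _
      ring
  rw [split]
  apply add_nonpos
  · linarith [hdiffpos]
  · apply Finset.sum_nonpos
    intro j _
    have := hreact j
    have hwj := (hw j).le
    nlinarith [hreact j, (hw j).le]
end
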